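/- Let H = Subgroup.closure {σ, τ} ⊆ GL(3, ℂ). Then Nat.card H = 24 and H is isomorphic as a group to the symmetric group on 4 letters, i.e. Nonempty (H ≃* Equiv.Perm (Fin 4)). (This realizes the octahedral polyhedral group 𝕆 of Table 1 of the paper.) -/

import Mathlib

open Matrix

namespace OctahedralAux

noncomputable def Dc : Matrix (Fin 3) (Fin 4) ℂ := !![1,1,-1,-1; 1,-1,1,-1; 1,-1,-1,1]

noncomputable def Jm : Matrix (Fin 4) (Fin 4) ℂ := Matrix.of fun _ _ => 1

noncomputable def P (g : Equiv.Perm (Fin 4)) : Matrix (Fin 4) (Fin 4) ℂ :=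
  Matrix.of fun i j => if g j = i then 1 else 0

noncomputable def sg (g : Equiv.Perm (Fin 4)) : ℂ := ((Equiv.Perm.sign g : ℤ) : ℂ)

noncomputable def Phi (g : Equiv.Perm (Fin 4)) : Matrix (Fin 3) (Fin 3) ℂ :=
  (sg g * (4:ℂ)⁻¹) • (Dc * P g * Dcᵀ)

lemma sg_mul (g h : Equiv.Perm (Fin 4)) : sg (g * h) = sg g * sg h := by
  simp only [sg, Equiv.Perm.sign_mul, Units.val_mul, Int.cast_mul]

lemma sg_eq_or (g : Equiv.Perm (Fin 4)) : sg g = 1 ∨ sg g = -1 := by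
  rcases Int.units_eq_one_or (Equiv.Perm.sign g) with h | h <;> simp [sg, h]

lemma P_one : P 1 = 1 := by
  ext i j
  simp [P, Matrix.one_apply, eq_comm]

lemma P_mul (g h : Equiv.Perm (Fin 4)) : P (g * h) = P g * P h := by
  ext i j
  rw [Matrix.mul_apply, Finset.sum_eq_single (h j)]
  · simp [P]
    exact if_congr Iff.rfl rfl rfl
  · intro k _ hk
    simp [P, Ne.symm hk]
  · simp

lemma P_mul_J (g : Equiv.Perm (Fin 4)) : P g * Jm = Jm := by
  ext i j
  rw [Matrix.mul_apply, Finset.sum_eq_single (g⁻¹ i)]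
  · simp [P, Jm]
  · intro k _ hk
    have hgk : g k ≠ i := fun hgk => hk (by simp [← hgk])
    simp [P, Jm, hgk]
  · simp

lemma J_mul_P (g : Equiv.Perm (Fin 4)) : Jm * P g = Jm := by
  ext i j
  rw [Matrix.mul_apply, Finset.sum_eq_single (g j)]
  · simp [P, Jm]
  · intro k _ hk
    simp [P, Jm, Ne.symm hk]
  · simp

lemma J_mul_J : Jm * Jm = (4:ℂ) • Jm := by
  ext i j
  simp [Jm, Matrix.mul_apply, Fin.sum_univ_four]

lemma Dct : Dcᵀ = !![1,1,1; 1,-1,-1; -1,1,-1; -1,-1,1] := by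
  ext i j; fin_cases i <;> fin_cases j <;> rfl

lemma Dt_mul_D : Dcᵀ * Dc = (4:ℂ) • 1 - Jm := by
  rw [Dct]
  ext i j
  fin_cases i <;> fin_cases j <;>
    simp [Dc, Jm, Matrix.mul_apply, Fin.sum_univ_three, Matrix.one_apply,
      Matrix.vecHead, Matrix.vecTail] <;> norm_num

lemma D_mul_Dt : Dc * Dcᵀ = (4:ℂ) • 1 := by
  rw [Dct]
  ext i j
  fin_cases i <;> fin_cases j <;>
    simp [Dc, Matrix.mul_apply, Fin.sum_univ_four, Matrix.one_apply,
      Matrix.vecHead, Matrix.vecTail] <;> norm_num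

lemma D_mul_J : Dc * Jm = 0 := by
  ext i j
  fin_cases i <;>
    simp [Dc, Jm, Matrix.mul_apply, Fin.sum_univ_four, Matrix.vecHead, Matrix.vecTail] <;> norm_num

lemma Phi_one : Phi 1 = 1 := by
  have h1 : sg 1 = 1 := by simp [sg]
  rw [Phi, P_one, Matrix.mul_one, D_mul_Dt, h1, smul_smul]
  norm_num

lemma Phi_mul (g h : Equiv.Perm (Fin 4)) : Phi (g * h) = Phi g * Phi h := by
  have key : (Dc * P g * Dcᵀ) * (Dc * P h * Dcᵀ) = (4:ℂ) • (Dc * P (g * h) * Dcᵀ) := by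
    have h1 : (Dc * P g * Dcᵀ) * (Dc * P h * Dcᵀ)
        = Dc * P g * (Dcᵀ * Dc) * (P h * Dcᵀ) := by
      simp only [Matrix.mul_assoc]
    have h2 : Dc * P g * Jm * (P h * Dcᵀ) = 0 := by
      rw [Matrix.mul_assoc Dc (P g) Jm, P_mul_J, D_mul_J, Matrix.zero_mul]
    rw [h1, Dt_mul_D, Matrix.mul_sub, Matrix.mul_smul, Matrix.mul_one, Matrix.sub_mul, h2,
      sub_zero, Matrix.smul_mul, P_mul]
    simp only [Matrix.mul_assoc]
  rw [Phi, Phi, Phi, Matrix.smul_mul, Matrix.mul_smul, smul_smul, key, smul_smul, sg_mul]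
  congr 1
  ring

noncomputable def phiM : Equiv.Perm (Fin 4) →* Matrix (Fin 3) (Fin 3) ℂ :=
  { toFun := Phi, map_one' := Phi_one, map_mul' := Phi_mul }

noncomputable def phi : Equiv.Perm (Fin 4) →* GL (Fin 3) ℂ := phiM.toHomUnits

lemma sandwich (g : Equiv.Perm (Fin 4)) :
    Dcᵀ * Phi g * Dc = sg g • ((4:ℂ) • P g - Jm) := by
  rw [Phi, Matrix.mul_smul, Matrix.smul_mul]
  have h1 : Dcᵀ * (Dc * P g * Dcᵀ) * Dc = (Dcᵀ * Dc) * P g * (Dcᵀ * Dc) := by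
    simp only [Matrix.mul_assoc]
  have hA1 : ((4:ℂ) • 1 - Jm) * P g = (4:ℂ) • P g - Jm := by
    rw [Matrix.sub_mul, Matrix.smul_mul, Matrix.one_mul, J_mul_P]
  have hA2 : ((4:ℂ) • P g - Jm) * ((4:ℂ) • 1 - Jm) = (16:ℂ) • P g - (4:ℂ) • Jm := by
    rw [Matrix.sub_mul, Matrix.mul_sub, Matrix.mul_sub, Matrix.smul_mul, Matrix.smul_mul,
      Matrix.mul_smul, Matrix.mul_one, Matrix.mul_smul, Matrix.mul_one, P_mul_J, J_mul_J,
      smul_smul]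
    norm_num
  rw [h1, Dt_mul_D, hA1, hA2, smul_sub, smul_sub, smul_smul, smul_smul, smul_smul]
  congr 2 <;> ring

lemma Phi_inj {g : Equiv.Perm (Fin 4)} (hg : Phi g = 1) : g = 1 := by
  have key : sg g • ((4:ℂ) • P g - Jm) = (4:ℂ) • 1 - Jm := by
    rw [← sandwich, hg, Matrix.mul_one, Dt_mul_D]
  apply Equiv.ext
  intro i
  simp only [Equiv.Perm.one_apply]
  by_contra hne
  have hii := congrArg (fun M => M i i) key
  simp only [Matrix.smul_apply, Matrix.sub_apply, Matrix.one_apply_eq, smul_eq_mul] at hii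
  rw [show P g i i = 0 from by simp [P, hne], show Jm i i = (1:ℂ) from rfl] at hii
  rcases sg_eq_or g with h | h <;> rw [h] at hii <;> norm_num at hii

def a : Equiv.Perm (Fin 4) := ⟨![1,3,0,2], ![2,0,3,1], by decide, by decide⟩
def b : Equiv.Perm (Fin 4) := ⟨![0,3,1,2], ![0,2,3,1], by decide, by decide⟩

lemma sg_a : sg a = -1 := by
  have : Equiv.Perm.sign a = -1 := by decide
  simp [sg, this]

lemma sg_b : sg b = 1 := by
  have : Equiv.Perm.sign b = 1 := by decide
  simp [sg, this]

lemma P_a : P a = !![0,0,1,0; 1,0,0,0; 0,0,0,1; 0,1,0,0] := by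
  ext i j
  fin_cases i <;> fin_cases j <;>
    simp [P, a, Matrix.vecHead, Matrix.vecTail] <;> norm_num

lemma P_b : P b = !![1,0,0,0; 0,0,1,0; 0,0,0,1; 0,1,0,0] := by
  ext i j
  fin_cases i <;> fin_cases j <;>
    simp [P, b, Matrix.vecHead, Matrix.vecTail] <;> norm_num

lemma Phi_a : Phi a = !![0,-1,0; 1,0,0; 0,0,1] := by
  rw [Phi, sg_a, P_a, Dct]
  ext i j
  fin_cases i <;> fin_cases j <;>
    simp [Dc, Matrix.mul_apply, Fin.sum_univ_four, Fin.sum_univ_three, Matrix.smul_apply,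
      Matrix.vecHead, Matrix.vecTail] <;> norm_num

lemma Phi_b : Phi b = !![0,1,0; 0,0,1; 1,0,0] := by
  rw [Phi, sg_b, P_b, Dct]
  ext i j
  fin_cases i <;> fin_cases j <;>
    simp [Dc, Matrix.mul_apply, Fin.sum_univ_four, Fin.sum_univ_three, Matrix.smul_apply,
      Matrix.vecHead, Matrix.vecTail] <;> norm_num

lemma key_swap : ∀ x y : Fin 4, x ≠ y → (Equiv.swap x y = a*b*b ∨ Equiv.swap x y = b*b*a ∨
    Equiv.swap x y = b*a*b ∨ Equiv.swap x y = a*a*b*a*b ∨ Equiv.swap x y = a*b*a*a ∨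
    Equiv.swap x y = a*a*b*a) := by
  decide

lemma closure_ab : Subgroup.closure ({a, b} : Set (Equiv.Perm (Fin 4))) = ⊤ := by
  have ha : a ∈ Subgroup.closure ({a, b} : Set (Equiv.Perm (Fin 4))) :=
    Subgroup.subset_closure (Set.mem_insert _ _)
  have hb : b ∈ Subgroup.closure ({a, b} : Set (Equiv.Perm (Fin 4))) :=
    Subgroup.subset_closure (Set.mem_insert_of_mem _ rfl)
  rw [eq_top_iff, ← Equiv.Perm.closure_isSwap, Subgroup.closure_le]
  rintro x ⟨i, j, hij, rfl⟩
  rcases key_swap i j hij with h | h | h | h | h | h <;> rw [h] <;>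
    (repeat' first | exact ha | exact hb | apply mul_mem)

end OctahedralAux

open OctahedralAux in
theorem octahedral_polyhedral_group (σ τ : GL (Fin 3) ℂ)
    (hσ : (σ : Matrix (Fin 3) (Fin 3) ℂ) = !![0, -1, 0; 1, 0, 0; 0, 0, 1])
    (hτ : (τ : Matrix (Fin 3) (Fin 3) ℂ) = !![0, 1, 0; 0, 0, 1; 1, 0, 0]) :
    Nat.card ↥(Subgroup.closure {σ, τ} : Subgroup (GL (Fin 3) ℂ)) = 24 ∧
      Nonempty (↥(Subgroup.closure {σ, τ} : Subgroup (GL (Fin 3) ℂ)) ≃*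
        Equiv.Perm (Fin 4)) := by
  have hφa : phi a = σ := by
    apply Units.ext
    rw [hσ]
    exact Phi_a
  have hφb : phi b = τ := by
    apply Units.ext
    rw [hτ]
    exact Phi_b
  have hrange : phi.range = Subgroup.closure {σ, τ} := by
    rw [MonoidHom.range_eq_map, ← closure_ab, MonoidHom.map_closure, Set.image_pair,
      hφa, hφb]
  have hinj : Function.Injective phi := by
    rw [injective_iff_map_eq_one]
    intro g hg
    exact Phi_inj (congrArg Units.val hg)
  have e : Equiv.Perm (Fin 4) ≃* phi.range := MonoidHom.ofInjective hinj
  refine ⟨?_, ⟨(MulEquiv.subgroupCongr hrange.symm).trans e.symm⟩⟩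
  rw [← hrange, ← Nat.card_congr e.toEquiv, Nat.card_eq_fintype_card, Fintype.card_perm,
    Fintype.card_fin]
  rfl
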